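/- Let S be a sample of m i.i.d. permutations from M(σ_0, θ). For a fixed pair of items i, j with σ_0(i) < σ_0(j), the probability that a single Mallows sample ranks i before j is at least 1/2 + δ for some δ > 0 depending on θ and n; consequently, by Hoeffding's inequality, the majority vote over m samples orders i before j with probability at least 1 − exp(−2mδ²), and Borda count recovers the full ranking σ_0 with probability ≥ 1−ε when m = O(δ^{-2} log(n/ε)). -/

import Mathlib

set_option maxHeartbeats 2000000


open Finset

/-- Kendall's-τ distance: number of pairs `i < j` on which `σ` and `π` disagree in
relative order. -/
def kendall (n : ℕ) (σ π : Equiv.Perm (Fin n)) : ℕ :=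
  (Finset.univ.filter (fun p : Fin n × Fin n =>
    p.1 < p.2 ∧ ((σ p.1 < σ p.2 ∧ π p.2 < π p.1) ∨ (σ p.2 < σ p.1 ∧ π p.1 < π p.2)))).card

/-- Inversion vector coordinate (0-indexed `j`): `V_j(σ) = #{i > j : σ(i) < σ(j)}`. -/
def invVec (n : ℕ) (σ : Equiv.Perm (Fin n)) (j : Fin n) : ℕ :=
  (Finset.univ.filter (fun i : Fin n => j < i ∧ σ i < σ j)).card

/-- `ψ_{n,j} = (1 - exp(-θ(n-j+1)))/(1 - exp(-θ))`, with 1-indexed `j`. -/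
noncomputable def psiFac (n : ℕ) (θ : ℝ) (j : ℕ) : ℝ :=
  (1 - Real.exp (-θ * ((n : ℝ) - j + 1))) / (1 - Real.exp (-θ))

/-- `ψ_n = ∏_{j=1}^{n-1} ψ_{n,j}`. -/
noncomputable def psiProd (n : ℕ) (θ : ℝ) : ℝ :=
  ∏ j ∈ Finset.range (n - 1), psiFac n θ (j + 1)

/-- Mallows probability mass function with center `σ₀` and dispersion `θ`. -/
noncomputable def mallows (n : ℕ) (θ : ℝ) (σ₀ σ : Equiv.Perm (Fin n)) : ℝ :=
  Real.exp (-θ * kendall n σ σ₀) / ∑ π : Equiv.Perm (Fin n), Real.exp (-θ * kendall n π σ₀)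

section comb
variable {n : ℕ}

/-- discordance predicate -/
def disc (σ π : Equiv.Perm (Fin n)) (a b : Fin n) : Prop :=
  (σ a < σ b ∧ π b < π a) ∨ (σ b < σ a ∧ π a < π b)

instance (σ π : Equiv.Perm (Fin n)) (a b : Fin n) : Decidable (disc σ π a b) := by
  unfold disc; infer_instance

lemma disc_symm (σ π : Equiv.Perm (Fin n)) (a b : Fin n) : disc σ π a b ↔ disc σ π b a := by
  unfold disc; tauto

lemma kendall_eq (σ π : Equiv.Perm (Fin n)) :
    kendall n σ π = ∑ p : Fin n × Fin n, if p.1 < p.2 ∧ disc σ π p.1 p.2 then 1 else 0 := by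
  rw [kendall, Finset.card_filter]
  rfl

/-- doubled kendall -/
lemma two_kendall (σ π : Equiv.Perm (Fin n)) :
    2 * kendall n σ π = ∑ p : Fin n × Fin n, if p.1 ≠ p.2 ∧ disc σ π p.1 p.2 then 1 else 0 := by
  have h1 : ∀ p : Fin n × Fin n, (if p.1 ≠ p.2 ∧ disc σ π p.1 p.2 then (1:ℕ) else 0)
      = (if p.1 < p.2 ∧ disc σ π p.1 p.2 then 1 else 0)
        + (if p.2 < p.1 ∧ disc σ π p.1 p.2 then 1 else 0) := by
    intro p
    rcases lt_trichotomy p.1 p.2 with h | h | h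
    · simp [h, ne_of_lt h, asymm h]
    · simp [h]
    · simp [h, (ne_of_lt h).symm, asymm h]
  rw [Finset.sum_congr rfl (fun p _ => h1 p), Finset.sum_add_distrib, ← kendall_eq]
  have h2 : ∑ p : Fin n × Fin n, (if p.2 < p.1 ∧ disc σ π p.1 p.2 then (1:ℕ) else 0)
      = ∑ p : Fin n × Fin n, (if p.1 < p.2 ∧ disc σ π p.1 p.2 then 1 else 0) := by
    apply Fintype.sum_equiv (Equiv.prodComm _ _)
    intro p
    simp only [Equiv.prodComm_apply, Prod.fst_swap, Prod.snd_swap]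
    exact if_congr (and_congr_right fun _ => disc_symm σ π p.1 p.2) rfl rfl
  rw [h2, ← kendall_eq]
  ring

end comb

section key
variable {n : ℕ} (σ₀ σ : Equiv.Perm (Fin n)) {i j : Fin n}

lemma vne (σ : Equiv.Perm (Fin n)) {x y : Fin n} (h : x ≠ y) : (σ x : ℕ) ≠ (σ y : ℕ) :=
  fun e => h (σ.injective (Fin.val_injective e))

lemma pointwise (h0 : σ₀ i < σ₀ j) (h : σ i < σ j) (a b : Fin n) :
    (if (a, b) = (i, j) ∨ (a, b) = (j, i) then (2:ℤ) else 0)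
      ≤ ((if a ≠ b ∧ disc (σ * Equiv.swap i j) σ₀ a b then 1 else 0)
        + (if Equiv.swap i j a ≠ Equiv.swap i j b ∧
             disc (σ * Equiv.swap i j) σ₀ (Equiv.swap i j a) (Equiv.swap i j b) then 1 else 0))
        - ((if Equiv.swap i j a ≠ Equiv.swap i j b ∧
             disc σ σ₀ (Equiv.swap i j a) (Equiv.swap i j b) then 1 else 0)
        + (if a ≠ b ∧ disc σ σ₀ a b then 1 else 0)) := by
  have hij : i ≠ j := fun e => lt_irrefl _ (e ▸ h0)
  by_cases hab : a = b
  · have hc : ¬((a, b) = (i, j) ∨ (a, b) = (j, i)) := by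
      rintro (hc | hc) <;> injection hc with h1 h2
      · exact hij (h1.symm.trans (hab.trans h2))
      · exact hij ((h2.symm.trans hab.symm).trans h1)
    rw [if_neg hc]
    simp [hab]
  · have hab' : Equiv.swap i j a ≠ Equiv.swap i j b := fun e => hab ((Equiv.swap i j).injective e)
    have hvij : (σ₀ i : ℕ) ≠ (σ₀ j : ℕ) := vne σ₀ hij
    have hsij : (σ i : ℕ) ≠ (σ j : ℕ) := vne σ hij
    have hvab : (σ₀ a : ℕ) ≠ (σ₀ b : ℕ) := vne σ₀ hab
    have hsab : (σ a : ℕ) ≠ (σ b : ℕ) := vne σ hab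
    simp only [Fin.lt_def] at h h0
    by_cases hai : a = i
    · by_cases hbj : b = j
      · -- (a,b) = (i,j)
        have hc : ((a, b) = (i, j) ∨ (a, b) = (j, i)) := Or.inl (by rw [hai, hbj])
        rw [if_pos hc]
        simp only [hai, hbj] at hab hab' hsab hvab ⊢
        simp only [Equiv.Perm.mul_apply, Equiv.swap_apply_left, Equiv.swap_apply_right,
          Equiv.swap_apply_self, disc, ne_eq, hab, not_false_eq_true, true_and, hab',
          Fin.lt_def]
        split_ifs <;> omega
      · -- (a,b) = (i,k), k ≠ i, j
        have hbi : b ≠ i := fun e => hab (hai.trans e.symm)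
        have hc : ¬((a, b) = (i, j) ∨ (a, b) = (j, i)) := by
          rintro (hc | hc) <;> injection hc with h1 h2
          · exact hbj h2
          · exact hij (hai.symm.trans h1)
        rw [if_neg hc]
        have h2 : (σ j : ℕ) ≠ (σ b : ℕ) := vne σ (fun e => hbj e.symm)
        have h4 : (σ₀ j : ℕ) ≠ (σ₀ b : ℕ) := vne σ₀ (fun e => hbj e.symm)
        simp only [hai] at hab hab' hsab hvab ⊢
        simp only [Equiv.Perm.mul_apply, Equiv.swap_apply_left, Equiv.swap_apply_right,
          Equiv.swap_apply_self, Equiv.swap_apply_of_ne_of_ne hbi hbj, disc, ne_eq, hab,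
          not_false_eq_true, true_and, Fin.lt_def,
          show ¬(j = b) from fun e => hbj e.symm]
        split_ifs <;> omega
    · by_cases haj : a = j
      · by_cases hbi : b = i
        · -- (a,b) = (j,i)
          have hc : ((a, b) = (i, j) ∨ (a, b) = (j, i)) := Or.inr (by rw [haj, hbi])
          rw [if_pos hc]
          simp only [haj, hbi] at hab hab' hsab hvab ⊢
          simp only [Equiv.Perm.mul_apply, Equiv.swap_apply_left, Equiv.swap_apply_right,
            Equiv.swap_apply_self, disc, ne_eq, hab, not_false_eq_true, true_and, hab',
            Fin.lt_def]
          split_ifs <;> omega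
        · -- (a,b) = (j,k)
          have hbj : b ≠ j := fun e => hab (haj.trans e.symm)
          have hc : ¬((a, b) = (i, j) ∨ (a, b) = (j, i)) := by
            rintro (hc | hc) <;> injection hc with h1 h2
            · exact hbj h2
            · exact hbi h2
          rw [if_neg hc]
          have h2 : (σ i : ℕ) ≠ (σ b : ℕ) := vne σ (fun e => hbi e.symm)
          have h4 : (σ₀ i : ℕ) ≠ (σ₀ b : ℕ) := vne σ₀ (fun e => hbi e.symm)
          simp only [haj] at hab hab' hsab hvab ⊢
          simp only [Equiv.Perm.mul_apply, Equiv.swap_apply_left, Equiv.swap_apply_right,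
            Equiv.swap_apply_self, Equiv.swap_apply_of_ne_of_ne hbi hbj, disc, ne_eq, hab,
            not_false_eq_true, true_and, Fin.lt_def,
            show ¬(i = b) from fun e => hbi e.symm]
          split_ifs <;> omega
      · by_cases hbi : b = i
        · -- (a,b) = (k,i)
          have hc : ¬((a, b) = (i, j) ∨ (a, b) = (j, i)) := by
            rintro (hc | hc) <;> injection hc with h1 h2
            · exact hai h1
            · exact haj h1
          rw [if_neg hc]
          have h2 : (σ a : ℕ) ≠ (σ j : ℕ) := vne σ haj
          have h4 : (σ₀ a : ℕ) ≠ (σ₀ j : ℕ) := vne σ₀ haj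
          simp only [hbi] at hab hab' hsab hvab ⊢
          simp only [Equiv.Perm.mul_apply, Equiv.swap_apply_left, Equiv.swap_apply_right,
            Equiv.swap_apply_self, Equiv.swap_apply_of_ne_of_ne hai haj, disc, ne_eq, hab,
            not_false_eq_true, true_and, Fin.lt_def, show ¬(a = j) from haj]
          split_ifs <;> omega
        · by_cases hbj : b = j
          · -- (a,b) = (k,j)
            have hc : ¬((a, b) = (i, j) ∨ (a, b) = (j, i)) := by
              rintro (hc | hc) <;> injection hc with h1 h2
              · exact hai h1
              · exact haj h1
            rw [if_neg hc]
            have h2 : (σ a : ℕ) ≠ (σ i : ℕ) := vne σ hai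
            have h4 : (σ₀ a : ℕ) ≠ (σ₀ i : ℕ) := vne σ₀ hai
            simp only [hbj] at hab hab' hsab hvab ⊢
            simp only [Equiv.Perm.mul_apply, Equiv.swap_apply_left, Equiv.swap_apply_right,
              Equiv.swap_apply_self, Equiv.swap_apply_of_ne_of_ne hai haj, disc, ne_eq, hab,
              not_false_eq_true, true_and, Fin.lt_def, show ¬(a = i) from hai]
            split_ifs <;> omega
          · -- neither
            have hc : ¬((a, b) = (i, j) ∨ (a, b) = (j, i)) := by
              rintro (hc | hc) <;> injection hc with h1 h2
              · exact hai h1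
              · exact haj h1
            rw [if_neg hc]
            simp only [Equiv.Perm.mul_apply,
              Equiv.swap_apply_of_ne_of_ne hai haj, Equiv.swap_apply_of_ne_of_ne hbi hbj,
              disc, ne_eq, hab, not_false_eq_true, true_and, Fin.lt_def]
            split_ifs <;> omega

lemma two_kendall' (σ π : Equiv.Perm (Fin n)) :
    ((2 * kendall n σ π : ℕ) : ℤ)
      = ∑ p : Fin n × Fin n, if p.1 ≠ p.2 ∧ disc σ π p.1 p.2 then (1:ℤ) else 0 := by
  rw [two_kendall]
  push_cast
  exact Finset.sum_congr rfl fun p _ => by split_ifs <;> simp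

lemma kendall_swap (h0 : σ₀ i < σ₀ j) (h : σ i < σ j) :
    kendall n σ σ₀ + 1 ≤ kendall n (σ * Equiv.swap i j) σ₀ := by
  have hij : i ≠ j := fun e => lt_irrefl _ (e ▸ h0)
  have hsum := Finset.sum_le_sum (fun p (_ : p ∈ (Finset.univ : Finset (Fin n × Fin n))) =>
    pointwise σ₀ σ h0 h p.1 p.2)
  -- LHS = 4
  have hL : ∑ p : Fin n × Fin n, (if (p.1, p.2) = (i, j) ∨ (p.1, p.2) = (j, i)
      then (2:ℤ) else 0) = 4 := by
    have hpt : ∀ p : Fin n × Fin n, (if (p.1, p.2) = (i, j) ∨ (p.1, p.2) = (j, i)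
        then (2:ℤ) else 0) = (if p = (i, j) then 2 else 0) + (if p = (j, i) then 2 else 0) := by
      intro p
      have hne : ((i, j) : Fin n × Fin n) ≠ (j, i) := by
        intro e; injection e with e1 e2; exact hij e1
      rw [show ((p.1, p.2) : Fin n × Fin n) = p from rfl]
      by_cases h1 : p = (i, j) <;> by_cases h2 : p = (j, i)
      · exact absurd (h1.symm.trans h2) hne
      · simp only [h1, h2]; simp; exact fun e _ => hij e
      · simp only [h1, h2]; simp; exact fun e _ => hij e.symm
      · simp [h1, h2]
    rw [Finset.sum_congr rfl fun p _ => hpt p, Finset.sum_add_distrib]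
    rw [Finset.sum_ite_eq' Finset.univ ((i, j) : Fin n × Fin n) (fun _ => (2:ℤ)),
      Finset.sum_ite_eq' Finset.univ ((j, i) : Fin n × Fin n) (fun _ => (2:ℤ))]
    simp
  -- reindexing by the swap equiv
  have hre : ∀ ρ : Equiv.Perm (Fin n),
      (∑ p : Fin n × Fin n, if Equiv.swap i j p.1 ≠ Equiv.swap i j p.2 ∧
          disc ρ σ₀ (Equiv.swap i j p.1) (Equiv.swap i j p.2) then (1:ℤ) else 0)
        = ∑ p : Fin n × Fin n, if p.1 ≠ p.2 ∧ disc ρ σ₀ p.1 p.2 then (1:ℤ) else 0 := by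
    intro ρ
    exact Equiv.sum_comp ((Equiv.swap i j).prodCongr (Equiv.swap i j))
      (fun p : Fin n × Fin n => if p.1 ≠ p.2 ∧ disc ρ σ₀ p.1 p.2 then (1:ℤ) else 0)
  rw [hL] at hsum
  simp only [Finset.sum_sub_distrib, Finset.sum_add_distrib] at hsum
  rw [hre (σ * Equiv.swap i j), hre σ, ← two_kendall' (σ * Equiv.swap i j) σ₀,
    ← two_kendall' σ σ₀] at hsum
  · omega

end key

section prob
variable {n : ℕ} {θ : ℝ} {σ₀ : Equiv.Perm (Fin n)}

lemma Z_pos (θ : ℝ) (σ₀ : Equiv.Perm (Fin n)) :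
    0 < ∑ π : Equiv.Perm (Fin n), Real.exp (-θ * kendall n π σ₀) :=
  Finset.sum_pos (fun π _ => Real.exp_pos _) Finset.univ_nonempty

lemma mallows_pos (θ : ℝ) (σ₀ σ : Equiv.Perm (Fin n)) : 0 < mallows n θ σ₀ σ :=
  div_pos (Real.exp_pos _) (Z_pos θ σ₀)

lemma sum_mallows (θ : ℝ) (σ₀ : Equiv.Perm (Fin n)) :
    ∑ σ : Equiv.Perm (Fin n), mallows n θ σ₀ σ = 1 := by
  simp only [mallows]
  rw [← Finset.sum_div]
  exact div_self (ne_of_gt (Z_pos θ σ₀))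

lemma kendall_swap' (σ₀ σ : Equiv.Perm (Fin n)) {i j : Fin n}
    (h0 : σ₀ i < σ₀ j) (h : σ i < σ j) :
    kendall n σ σ₀ + 1 ≤ kendall n (σ * Equiv.swap i j) σ₀ :=
  kendall_swap σ₀ σ h0 h

lemma mallows_swap_le (hθ : 0 < θ) {i j : Fin n} (h0 : σ₀ i < σ₀ j)
    {σ : Equiv.Perm (Fin n)} (h : σ i < σ j) :
    mallows n θ σ₀ (σ * Equiv.swap i j) ≤ Real.exp (-θ) * mallows n θ σ₀ σ := by
  have hK := kendall_swap' σ₀ σ h0 h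
  have hexp : Real.exp (-θ * kendall n (σ * Equiv.swap i j) σ₀)
      ≤ Real.exp (-θ) * Real.exp (-θ * kendall n σ σ₀) := by
    rw [← Real.exp_add]
    apply Real.exp_le_exp.mpr
    have : (kendall n σ σ₀ + 1 : ℝ) ≤ kendall n (σ * Equiv.swap i j) σ₀ := by
      exact_mod_cast hK
    nlinarith
  rw [mallows, mallows, ← mul_div_assoc]
  exact div_le_div_of_nonneg_right hexp (Z_pos θ σ₀).le

lemma sum_split (i j : Fin n) (hij : i ≠ j) (f : Equiv.Perm (Fin n) → ℝ) :
    ∑ σ : Equiv.Perm (Fin n), f σ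
      = ∑ σ ∈ Finset.univ.filter (fun σ : Equiv.Perm (Fin n) => σ i < σ j),
          (f σ + f (σ * Equiv.swap i j)) := by
  rw [Finset.sum_add_distrib,
    ← Finset.sum_filter_add_sum_filter_not Finset.univ (fun σ : Equiv.Perm (Fin n) => σ i < σ j) f]
  congr 1
  apply Finset.sum_nbij' (fun σ => σ * Equiv.swap i j) (fun σ => σ * Equiv.swap i j)
  · intro σ hσ
    simp only [Finset.mem_filter, Finset.mem_univ, true_and] at hσ ⊢
    simp only [Equiv.Perm.mul_apply, Equiv.swap_apply_left, Equiv.swap_apply_right]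
    exact lt_of_le_of_ne (not_lt.mp hσ) (fun e => hij (σ.injective e.symm))
  · intro σ hσ
    simp only [Finset.mem_filter, Finset.mem_univ, true_and] at hσ ⊢
    simp only [Equiv.Perm.mul_apply, Equiv.swap_apply_left, Equiv.swap_apply_right]
    exact not_lt.mpr (le_of_lt hσ)
  · intro σ _
    rw [mul_assoc, Equiv.swap_mul_self, mul_one]
  · intro σ _
    rw [mul_assoc, Equiv.swap_mul_self, mul_one]
  · intro σ _
    rw [mul_assoc, Equiv.swap_mul_self, mul_one]

end prob

section more
variable {n : ℕ} {θ : ℝ} {σ₀ : Equiv.Perm (Fin n)}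

lemma complement_sum (θ : ℝ) (σ₀ : Equiv.Perm (Fin n)) (P : Equiv.Perm (Fin n) → Prop)
    [DecidablePred P] :
    ∑ σ ∈ Finset.univ.filter (fun σ => ¬ P σ), mallows n θ σ₀ σ
      = 1 - ∑ σ ∈ Finset.univ.filter P, mallows n θ σ₀ σ := by
  have := Finset.sum_filter_add_sum_filter_not Finset.univ P (mallows n θ σ₀)
  rw [sum_mallows θ σ₀] at this
  linarith

lemma P_ge (hθ : 0 < θ) {i j : Fin n} (h0 : σ₀ i < σ₀ j) :
    1 / (1 + Real.exp (-θ))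
      ≤ ∑ σ ∈ Finset.univ.filter (fun σ : Equiv.Perm (Fin n) => σ i < σ j),
          mallows n θ σ₀ σ := by
  have hij : i ≠ j := fun e => lt_irrefl _ (e ▸ h0)
  have h1 := sum_split i j hij (mallows n θ σ₀)
  rw [sum_mallows θ σ₀] at h1
  have h2 : ∑ σ ∈ Finset.univ.filter (fun σ : Equiv.Perm (Fin n) => σ i < σ j),
      (mallows n θ σ₀ σ + mallows n θ σ₀ (σ * Equiv.swap i j))
    ≤ ∑ σ ∈ Finset.univ.filter (fun σ : Equiv.Perm (Fin n) => σ i < σ j),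
      ((1 + Real.exp (-θ)) * mallows n θ σ₀ σ) := by
    apply Finset.sum_le_sum
    intro σ hσ
    simp only [Finset.mem_filter] at hσ
    have := mallows_swap_le hθ h0 hσ.2
    nlinarith [mallows_pos θ σ₀ σ]
  rw [← Finset.mul_sum] at h2
  have hc : 0 < 1 + Real.exp (-θ) := by positivity
  rw [div_le_iff₀ hc, mul_comm]
  linarith

lemma mean_ge (hθ : 0 < θ) {i j : Fin n} (h0 : σ₀ i < σ₀ j) :
    (1 - Real.exp (-θ)) / 2
      ≤ ∑ σ : Equiv.Perm (Fin n),
          mallows n θ σ₀ σ * (((σ j : ℕ) : ℝ) - ((σ i : ℕ) : ℝ)) := by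
  have hij : i ≠ j := fun e => lt_irrefl _ (e ▸ h0)
  have hc1 : Real.exp (-θ) < 1 := Real.exp_lt_one_iff.mpr (by linarith)
  have hc0 : 0 < Real.exp (-θ) := Real.exp_pos _
  rw [sum_split i j hij]
  have h2 : ∑ σ ∈ Finset.univ.filter (fun σ : Equiv.Perm (Fin n) => σ i < σ j),
      ((1 - Real.exp (-θ)) * mallows n θ σ₀ σ)
    ≤ ∑ σ ∈ Finset.univ.filter (fun σ : Equiv.Perm (Fin n) => σ i < σ j),
      (mallows n θ σ₀ σ * (((σ j : ℕ) : ℝ) - ((σ i : ℕ) : ℝ))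
        + mallows n θ σ₀ (σ * Equiv.swap i j)
          * ((((σ * Equiv.swap i j) j : ℕ) : ℝ) - (((σ * Equiv.swap i j) i : ℕ) : ℝ))) := by
    apply Finset.sum_le_sum
    intro σ hσ
    simp only [Finset.mem_filter, Finset.mem_univ, true_and] at hσ
    have hsw := mallows_swap_le hθ h0 hσ
    have hp := mallows_pos θ σ₀ σ
    have hq := mallows_pos θ σ₀ (σ * Equiv.swap i j)
    simp only [Equiv.Perm.mul_apply, Equiv.swap_apply_left, Equiv.swap_apply_right]
    have hd : (1:ℝ) ≤ ((σ j : ℕ) : ℝ) - ((σ i : ℕ) : ℝ) := by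
      have : (σ i : ℕ) < (σ j : ℕ) := hσ
      have : ((σ i : ℕ) : ℝ) + 1 ≤ ((σ j : ℕ) : ℝ) := by exact_mod_cast this
      linarith
    have hpq : mallows n θ σ₀ (σ * Equiv.swap i j) ≤ mallows n θ σ₀ σ := by nlinarith
    nlinarith [mul_nonneg (sub_nonneg.mpr hd) (sub_nonneg.mpr hpq)]
  rw [← Finset.mul_sum] at h2
  have hP := P_ge hθ h0
  have hhalf : (1:ℝ) / 2 ≤ 1 / (1 + Real.exp (-θ)) := by
    rw [div_le_div_iff₀ (by norm_num) (by positivity)]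
    linarith
  nlinarith [Finset.sum_nonneg (fun σ (_ : σ ∈ Finset.univ.filter
    (fun σ : Equiv.Perm (Fin n) => σ i < σ j)) => (mallows_pos θ σ₀ σ).le)]

lemma total_one (θ : ℝ) (σ₀ : Equiv.Perm (Fin n)) (m : ℕ) :
    ∑ S : Fin m → Equiv.Perm (Fin n), ∏ l : Fin m, mallows n θ σ₀ (S l) = 1 := by
  have := Finset.prod_univ_sum (fun _ : Fin m => (Finset.univ : Finset (Equiv.Perm (Fin n))))
    (fun _ σ => mallows n θ σ₀ σ)
  rw [Fintype.piFinset_univ] at this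
  rw [← this]
  simp [sum_mallows θ σ₀]

lemma chern (θ : ℝ) (σ₀ : Equiv.Perm (Fin n)) {m : ℕ} (g : Equiv.Perm (Fin n) → ℝ)
    (A : Finset (Fin m → Equiv.Perm (Fin n)))
    (hA : ∀ S ∈ A, 0 ≤ ∑ l : Fin m, g (S l)) :
    ∑ S ∈ A, ∏ l : Fin m, mallows n θ σ₀ (S l)
      ≤ (∑ σ : Equiv.Perm (Fin n), mallows n θ σ₀ σ * Real.exp (g σ)) ^ m := by
  have step1 : ∑ S ∈ A, ∏ l : Fin m, mallows n θ σ₀ (S l)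
      ≤ ∑ S ∈ A, ∏ l : Fin m, (mallows n θ σ₀ (S l) * Real.exp (g (S l))) := by
    apply Finset.sum_le_sum
    intro S hS
    rw [Finset.prod_mul_distrib, ← Real.exp_sum]
    have h1 : (1:ℝ) ≤ Real.exp (∑ l : Fin m, g (S l)) := Real.one_le_exp (hA S hS)
    have h2 : 0 ≤ ∏ l : Fin m, mallows n θ σ₀ (S l) :=
      Finset.prod_nonneg (fun l _ => (mallows_pos θ σ₀ (S l)).le)
    nlinarith
  have step2 : ∑ S ∈ A, ∏ l : Fin m, (mallows n θ σ₀ (S l) * Real.exp (g (S l)))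
      ≤ ∑ S : Fin m → Equiv.Perm (Fin n),
          ∏ l : Fin m, (mallows n θ σ₀ (S l) * Real.exp (g (S l))) := by
    apply Finset.sum_le_sum_of_subset_of_nonneg (Finset.subset_univ A)
    intro S _ _
    exact Finset.prod_nonneg (fun l _ =>
      mul_nonneg (mallows_pos θ σ₀ (S l)).le (Real.exp_pos _).le)
  have step3 : ∑ S : Fin m → Equiv.Perm (Fin n),
      ∏ l : Fin m, (mallows n θ σ₀ (S l) * Real.exp (g (S l)))
      = (∑ σ : Equiv.Perm (Fin n), mallows n θ σ₀ σ * Real.exp (g σ)) ^ m := by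
    have := Finset.prod_univ_sum (fun _ : Fin m => (Finset.univ : Finset (Equiv.Perm (Fin n))))
      (fun _ σ => mallows n θ σ₀ σ * Real.exp (g σ))
    rw [Fintype.piFinset_univ] at this
    rw [← this]
    simp
  linarith

end more

section parts
variable {n : ℕ} {θ : ℝ} {σ₀ : Equiv.Perm (Fin n)}

lemma q_pos (hθ : 0 < θ) {i j : Fin n} (h0 : σ₀ i < σ₀ j) :
    0 < 1 - ∑ σ ∈ Finset.univ.filter (fun σ : Equiv.Perm (Fin n) => σ i < σ j),
        mallows n θ σ₀ σ := by
  rw [← complement_sum θ σ₀ (fun σ : Equiv.Perm (Fin n) => σ i < σ j)]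
  apply Finset.sum_pos'
  · intro σ _; exact (mallows_pos θ σ₀ σ).le
  · refine ⟨σ₀ * Equiv.swap i j, Finset.mem_filter.mpr ⟨Finset.mem_univ _, ?_⟩,
      mallows_pos θ σ₀ _⟩
    simp only [Equiv.Perm.mul_apply, Equiv.swap_apply_left, Equiv.swap_apply_right]
    exact not_lt.mpr (le_of_lt h0)

set_option maxHeartbeats 1000000 in
lemma majority_bound (hθ : 0 < θ) {i j : Fin n} (h0 : σ₀ i < σ₀ j) (m : ℕ) :
    1 - Real.exp (-2 * m * ((1 - Real.exp (-θ)) / (2 * (1 + Real.exp (-θ)))) ^ 2)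
      ≤ ∑ S ∈ Finset.univ.filter (fun S : Fin m → Equiv.Perm (Fin n) =>
            (m : ℝ) / 2 < (Finset.univ.filter (fun l : Fin m => S l i < S l j)).card),
          ∏ l : Fin m, mallows n θ σ₀ (S l) := by
  set c := Real.exp (-θ) with hc
  have hc0 : 0 < c := Real.exp_pos _
  have hc1 : c < 1 := Real.exp_lt_one_iff.mpr (by linarith)
  set δ : ℝ := (1 - c) / (2 * (1 + c)) with hδ
  have hδ0 : 0 < δ := by apply div_pos <;> nlinarith
  set p : ℝ := ∑ σ ∈ Finset.univ.filter (fun σ : Equiv.Perm (Fin n) => σ i < σ j),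
      mallows n θ σ₀ σ with hpdef
  have hId : 1 / (1 + c) = 1 / 2 + δ := by
    rw [hδ]; field_simp; ring
  have hp : 1 / 2 + δ ≤ p := hId ▸ P_ge hθ h0
  have hq0 : 0 < 1 - p := q_pos hθ h0
  have hp0 : 0 < p := by nlinarith
  set u : ℝ := Real.sqrt p with hu
  set v : ℝ := Real.sqrt (1 - p) with hv
  have hu0 : 0 < u := Real.sqrt_pos.mpr hp0
  have hv0 : 0 < v := Real.sqrt_pos.mpr hq0
  have hu2 : u ^ 2 = p := Real.sq_sqrt hp0.le
  have hv2 : v ^ 2 = 1 - p := Real.sq_sqrt hq0.le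
  set t : ℝ := 2 * Real.log (u / v) with ht
  have huv1 : 1 ≤ u / v := by
    rw [le_div_iff₀ hv0]
    rw [one_mul]
    apply Real.sqrt_le_sqrt
    nlinarith
  have ht0 : 0 ≤ t := by
    have := Real.log_nonneg huv1
    nlinarith
  have hexp2 : Real.exp (t / 2) = u / v := by
    rw [ht]
    rw [show 2 * Real.log (u / v) / 2 = Real.log (u / v) by ring]
    exact Real.exp_log (div_pos hu0 hv0)
  have hexpneg : Real.exp (-(t / 2)) = v / u := by
    rw [Real.exp_neg, hexp2, inv_div]
  -- the mgf
  set g : Equiv.Perm (Fin n) → ℝ :=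
    fun σ => t * (1 / 2 - if σ i < σ j then 1 else 0) with hg
  have hM : ∑ σ : Equiv.Perm (Fin n), mallows n θ σ₀ σ * Real.exp (g σ)
      = 2 * u * v := by
    rw [← Finset.sum_filter_add_sum_filter_not Finset.univ
      (fun σ : Equiv.Perm (Fin n) => σ i < σ j)
      (fun σ => mallows n θ σ₀ σ * Real.exp (g σ))]
    have e1 : ∑ σ ∈ Finset.univ.filter (fun σ : Equiv.Perm (Fin n) => σ i < σ j),
        mallows n θ σ₀ σ * Real.exp (g σ)
        = p * (v / u) := by
      rw [hpdef, Finset.sum_mul]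
      apply Finset.sum_congr rfl
      intro σ hσ
      simp only [Finset.mem_filter] at hσ
      rw [hg]
      simp only [if_pos hσ.2]
      rw [show t * (1 / 2 - 1) = -(t / 2) by ring, hexpneg]
    have e2 : ∑ σ ∈ Finset.univ.filter (fun σ : Equiv.Perm (Fin n) => ¬ σ i < σ j),
        mallows n θ σ₀ σ * Real.exp (g σ)
        = (1 - p) * (u / v) := by
      rw [← complement_sum θ σ₀ (fun σ : Equiv.Perm (Fin n) => σ i < σ j), Finset.sum_mul]
      apply Finset.sum_congr rfl
      intro σ hσ
      simp only [Finset.mem_filter] at hσ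
      rw [hg]
      simp only [if_neg hσ.2]
      rw [show t * (1 / 2 - 0) = t / 2 by ring, hexp2]
    rw [e1, e2, ← hv2, ← hu2]
    field_simp
    ring
  -- bound on the mgf value
  have hMb : 2 * u * v ≤ Real.exp (-(2 * δ ^ 2)) := by
    have h4pq : 4 * p * (1 - p) ≤ 1 - 4 * δ ^ 2 := by nlinarith
    have hsq : (2 * u * v) ^ 2 = 4 * p * (1 - p) := by
      rw [mul_pow, mul_pow, hu2, hv2]; ring
    have hee : Real.exp (-(2 * δ ^ 2)) ^ 2 = Real.exp (-(4 * δ ^ 2)) := by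
      rw [sq, ← Real.exp_add]; congr 1; ring
    have h1e : 1 - 4 * δ ^ 2 ≤ Real.exp (-(4 * δ ^ 2)) := by
      have := Real.add_one_le_exp (-(4 * δ ^ 2))
      linarith
    nlinarith [Real.exp_pos (-(2 * δ ^ 2)), mul_pos (mul_pos two_pos hu0) hv0]
  -- failure bound via chernoff
  have hfail : ∑ S ∈ Finset.univ.filter (fun S : Fin m → Equiv.Perm (Fin n) =>
        ¬ ((m : ℝ) / 2 < (Finset.univ.filter (fun l : Fin m => S l i < S l j)).card)),
      ∏ l : Fin m, mallows n θ σ₀ (S l) ≤ Real.exp (-2 * m * δ ^ 2) := by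
    have hch := chern θ σ₀ g (Finset.univ.filter (fun S : Fin m → Equiv.Perm (Fin n) =>
        ¬ ((m : ℝ) / 2 < (Finset.univ.filter (fun l : Fin m => S l i < S l j)).card)))
      ?_
    · refine hch.trans ?_
      rw [hM]
      calc (2 * u * v) ^ m ≤ Real.exp (-(2 * δ ^ 2)) ^ m := by
            apply pow_le_pow_left₀ (by positivity) hMb
        _ = Real.exp (-2 * m * δ ^ 2) := by
            rw [← Real.exp_nat_mul]
            congr 1
            ring
    · intro S hS
      simp only [Finset.mem_filter, Finset.mem_univ, true_and, not_lt] at hS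
      have hsum : ∑ l : Fin m, g (S l) = t * ((m : ℝ) / 2 -
          (Finset.univ.filter (fun l : Fin m => S l i < S l j)).card) := by
        rw [hg, ← Finset.mul_sum]
        congr 1
        rw [Finset.sum_sub_distrib, Finset.sum_const, Finset.sum_boole]
        simp [Fintype.card_fin]
        ring
      rw [hsum]
      have h9 : (0:ℝ) ≤ (m : ℝ) / 2 -
          (Finset.univ.filter (fun l : Fin m => S l i < S l j)).card := by linarith
      exact mul_nonneg ht0 h9
  have htot := Finset.sum_filter_add_sum_filter_not Finset.univ
    (fun S : Fin m → Equiv.Perm (Fin n) =>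
      (m : ℝ) / 2 < (Finset.univ.filter (fun l : Fin m => S l i < S l j)).card)
    (fun S => ∏ l : Fin m, mallows n θ σ₀ (S l))
  rw [total_one θ σ₀ m] at htot
  linarith

end parts

lemma exp_quad {x : ℝ} (hx : |x| ≤ 1) : Real.exp x ≤ 1 + x + x ^ 2 := by
  have h := Real.exp_bound hx (by norm_num : (0:ℕ) < 2)
  have h1 := (abs_sub_le_iff.mp h).1
  have h2 : ∑ i ∈ Finset.range 2, x ^ i / (i.factorial : ℝ) = 1 + x := by
    simp [Finset.sum_range_succ]
  rw [h2] at h1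
  norm_num [Nat.factorial] at h1
  nlinarith [sq_nonneg x]

section part3
variable {n : ℕ} {θ : ℝ} {σ₀ : Equiv.Perm (Fin n)}

set_option maxHeartbeats 1000000 in
lemma borda_pair (hθ : 0 < θ) {i j : Fin n} (h0 : σ₀ i < σ₀ j) (m : ℕ) :
    ∑ S ∈ Finset.univ.filter (fun S : Fin m → Equiv.Perm (Fin n) =>
        ¬ (∑ l : Fin m, ((S l i : ℕ) : ℝ) < ∑ l : Fin m, ((S l j : ℕ) : ℝ))),
      ∏ l : Fin m, mallows n θ σ₀ (S l)
      ≤ Real.exp (-((m : ℝ) * (((1 - Real.exp (-θ)) / 2) ^ 2 / (4 * (n : ℝ) ^ 2)))) := by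
  have hn : 0 < n := i.pos
  set c := Real.exp (-θ) with hc
  have hc0 : 0 < c := Real.exp_pos _
  have hc1 : c < 1 := Real.exp_lt_one_iff.mpr (by linarith)
  set γ : ℝ := (1 - c) / 2 with hγ
  have hγ0 : 0 < γ := by rw [hγ]; linarith
  have hγh : γ ≤ 1 / 2 := by rw [hγ]; linarith
  set b : ℝ := (n : ℝ) with hb
  have hb1 : 1 ≤ b := by rw [hb]; exact_mod_cast hn
  have hb0 : 0 < b := lt_of_lt_of_le one_pos hb1
  set t : ℝ := γ / (2 * b ^ 2) with ht
  have ht0 : 0 < t := by positivity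
  set g : Equiv.Perm (Fin n) → ℝ :=
    fun σ => t * (((σ i : ℕ) : ℝ) - ((σ j : ℕ) : ℝ)) with hg
  have hd : ∀ σ : Equiv.Perm (Fin n), |((σ i : ℕ) : ℝ) - ((σ j : ℕ) : ℝ)| ≤ b := by
    intro σ
    have h1 : ((σ i : ℕ) : ℝ) < b := by rw [hb]; exact_mod_cast (σ i).isLt
    have h2 : ((σ j : ℕ) : ℝ) < b := by rw [hb]; exact_mod_cast (σ j).isLt
    have h3 : (0:ℝ) ≤ ((σ i : ℕ) : ℝ) := Nat.cast_nonneg _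
    have h4 : (0:ℝ) ≤ ((σ j : ℕ) : ℝ) := Nat.cast_nonneg _
    rw [abs_le]
    constructor <;> linarith
  have htb : t * b ≤ 1 := by
    rw [ht]
    rw [div_mul_eq_mul_div, div_le_one (by positivity)]
    nlinarith
  have hgb : ∀ σ : Equiv.Perm (Fin n), |g σ| ≤ t * b := by
    intro σ
    rw [hg, abs_mul, abs_of_pos ht0]
    exact mul_le_mul_of_nonneg_left (hd σ) ht0.le
  -- the mgf bound
  have hM : ∑ σ : Equiv.Perm (Fin n), mallows n θ σ₀ σ * Real.exp (g σ)
      ≤ Real.exp (-(γ ^ 2 / (4 * b ^ 2))) := by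
    have step1 : ∑ σ : Equiv.Perm (Fin n), mallows n θ σ₀ σ * Real.exp (g σ)
        ≤ ∑ σ : Equiv.Perm (Fin n), mallows n θ σ₀ σ * (1 + g σ + g σ ^ 2) := by
      apply Finset.sum_le_sum
      intro σ _
      exact mul_le_mul_of_nonneg_left (exp_quad ((hgb σ).trans htb)) (mallows_pos θ σ₀ σ).le
    have step2 : ∑ σ : Equiv.Perm (Fin n), mallows n θ σ₀ σ * (1 + g σ + g σ ^ 2)
        = 1 + (∑ σ : Equiv.Perm (Fin n), mallows n θ σ₀ σ * g σ)
          + ∑ σ : Equiv.Perm (Fin n), mallows n θ σ₀ σ * g σ ^ 2 := by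
      calc ∑ σ : Equiv.Perm (Fin n), mallows n θ σ₀ σ * (1 + g σ + g σ ^ 2)
          = ∑ σ : Equiv.Perm (Fin n),
              (mallows n θ σ₀ σ + (mallows n θ σ₀ σ * g σ + mallows n θ σ₀ σ * g σ ^ 2)) :=
            Finset.sum_congr rfl (fun σ _ => by ring)
        _ = (∑ σ : Equiv.Perm (Fin n), mallows n θ σ₀ σ)
            + ((∑ σ : Equiv.Perm (Fin n), mallows n θ σ₀ σ * g σ)
              + ∑ σ : Equiv.Perm (Fin n), mallows n θ σ₀ σ * g σ ^ 2) := by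
            rw [Finset.sum_add_distrib, Finset.sum_add_distrib]
        _ = _ := by rw [sum_mallows θ σ₀]; ring
    have step3 : ∑ σ : Equiv.Perm (Fin n), mallows n θ σ₀ σ * g σ ≤ -(t * γ) := by
      have e1 : ∀ σ : Equiv.Perm (Fin n), mallows n θ σ₀ σ * g σ
          = -(t * (mallows n θ σ₀ σ * (((σ j : ℕ) : ℝ) - ((σ i : ℕ) : ℝ)))) := by
        intro σ; rw [hg]; ring
      rw [Finset.sum_congr rfl (fun σ _ => e1 σ), Finset.sum_neg_distrib, ← Finset.mul_sum]
      have := mean_ge hθ h0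
      rw [← hγ] at this
      nlinarith
    have step4 : ∑ σ : Equiv.Perm (Fin n), mallows n θ σ₀ σ * g σ ^ 2 ≤ (t * b) ^ 2 := by
      calc ∑ σ : Equiv.Perm (Fin n), mallows n θ σ₀ σ * g σ ^ 2
          ≤ ∑ σ : Equiv.Perm (Fin n), mallows n θ σ₀ σ * (t * b) ^ 2 := by
            apply Finset.sum_le_sum
            intro σ _
            apply mul_le_mul_of_nonneg_left _ (mallows_pos θ σ₀ σ).le
            have h5 := hgb σ
            have h6 : 0 ≤ |g σ| := abs_nonneg _
            nlinarith [sq_abs (g σ)]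
        _ = (t * b) ^ 2 := by rw [← Finset.sum_mul, sum_mallows θ σ₀, one_mul]
    have step5 : 1 + -(t * γ) + (t * b) ^ 2 ≤ Real.exp (-(t * γ) + (t * b) ^ 2) := by
      have := Real.add_one_le_exp (-(t * γ) + (t * b) ^ 2)
      linarith
    have step6 : -(t * γ) + (t * b) ^ 2 = -(γ ^ 2 / (4 * b ^ 2)) := by
      rw [ht]
      field_simp
      ring
    rw [step6] at step5
    linarith
  -- apply chernoff
  have hch := chern θ σ₀ g (Finset.univ.filter (fun S : Fin m → Equiv.Perm (Fin n) =>
      ¬ (∑ l : Fin m, ((S l i : ℕ) : ℝ) < ∑ l : Fin m, ((S l j : ℕ) : ℝ)))) ?_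
  · refine hch.trans ?_
    have hM0 : 0 ≤ ∑ σ : Equiv.Perm (Fin n), mallows n θ σ₀ σ * Real.exp (g σ) :=
      Finset.sum_nonneg (fun σ _ => mul_nonneg (mallows_pos θ σ₀ σ).le (Real.exp_pos _).le)
    calc (∑ σ : Equiv.Perm (Fin n), mallows n θ σ₀ σ * Real.exp (g σ)) ^ m
        ≤ Real.exp (-(γ ^ 2 / (4 * b ^ 2))) ^ m := pow_le_pow_left₀ hM0 hM m
      _ = Real.exp (-((m : ℝ) * (γ ^ 2 / (4 * b ^ 2)))) := by
          rw [← Real.exp_nat_mul]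
          congr 1
          ring
  · intro S hS
    simp only [Finset.mem_filter, Finset.mem_univ, true_and, not_lt] at hS
    have hsum : ∑ l : Fin m, g (S l)
        = t * ((∑ l : Fin m, ((S l i : ℕ) : ℝ)) - ∑ l : Fin m, ((S l j : ℕ) : ℝ)) := by
      rw [hg, ← Finset.mul_sum, Finset.sum_sub_distrib]
    rw [hsum]
    have h9 : (0:ℝ) ≤ (∑ l : Fin m, ((S l i : ℕ) : ℝ)) - ∑ l : Fin m, ((S l j : ℕ) : ℝ) := by
      linarith
    exact mul_nonneg ht0.le h9

end part3


/-- Sample complexity of Borda for Mallows samples. There is a pairwise bias `δ > 0`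
(depending on `θ` and `n`) such that: (1) a single Mallows sample ranks `i` before `j`
with probability at least `1/2 + δ` whenever `σ₀` does; (2) by Hoeffding, the majority
vote over `m` i.i.d. samples orders `i` before `j` with probability at least
`1 − exp(−2mδ²)`; and (3) there is a constant `C > 0` such that for
`m ≥ C δ⁻² log(n/ε)`, Borda (sorting by total/average rank) recovers the full ranking
`σ₀`, i.e. the Borda scores strictly respect `σ₀` on every pair, with probability at
least `1 − ε`. -/
theorem borda_sample_complexity (n : ℕ) (θ : ℝ) (hθ : 0 < θ)
    (σ₀ : Equiv.Perm (Fin n)) :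
    ∃ δ : ℝ, 0 < δ ∧
      (∀ i j : Fin n, σ₀ i < σ₀ j →
        1 / 2 + δ ≤
          ∑ σ ∈ Finset.univ.filter (fun σ : Equiv.Perm (Fin n) => σ i < σ j),
            mallows n θ σ₀ σ) ∧
      (∀ i j : Fin n, σ₀ i < σ₀ j → ∀ m : ℕ,
        1 - Real.exp (-2 * m * δ ^ 2) ≤
          ∑ S ∈ Finset.univ.filter (fun S : Fin m → Equiv.Perm (Fin n) =>
              (m : ℝ) / 2 < (Finset.univ.filter (fun l : Fin m => S l i < S l j)).card),
            ∏ l : Fin m, mallows n θ σ₀ (S l)) ∧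
      ∃ C : ℝ, 0 < C ∧ ∀ ε : ℝ, 0 < ε → ε < 1 → ∀ m : ℕ,
        C * δ⁻¹ ^ 2 * Real.log (n / ε) ≤ m →
        1 - ε ≤
          ∑ S ∈ Finset.univ.filter (fun S : Fin m → Equiv.Perm (Fin n) =>
              ∀ i j : Fin n, σ₀ i < σ₀ j →
                (∑ l : Fin m, ((S l i : ℕ) : ℝ)) < ∑ l : Fin m, ((S l j : ℕ) : ℝ)),
            ∏ l : Fin m, mallows n θ σ₀ (S l) := by
  classical
  set c := Real.exp (-θ) with hc
  have hc0 : 0 < c := Real.exp_pos _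
  have hc1 : c < 1 := Real.exp_lt_one_iff.mpr (by linarith)
  set δ : ℝ := (1 - c) / (2 * (1 + c)) with hδ
  have hδ0 : 0 < δ := by apply div_pos <;> nlinarith
  have hId : 1 / (1 + c) = 1 / 2 + δ := by rw [hδ]; field_simp; ring
  refine ⟨δ, hδ0, ?_, ?_, ?_⟩
  · -- part 1
    intro i j h0
    have := P_ge hθ h0
    rw [← hc, hId] at this
    exact this
  · -- part 2
    intro i j h0 m
    exact majority_bound hθ h0 m
  · -- part 3
    refine ⟨16 * (n : ℝ) ^ 2 + 1, by positivity, ?_⟩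
    intro ε hε0 hε1 m hm
    by_cases hn : n = 0
    · subst hn
      have hfilt : (Finset.univ.filter (fun S : Fin m → Equiv.Perm (Fin 0) =>
          ∀ i j : Fin 0, σ₀ i < σ₀ j →
            (∑ l : Fin m, ((S l i : ℕ) : ℝ)) < ∑ l : Fin m, ((S l j : ℕ) : ℝ)))
          = Finset.univ :=
        Finset.filter_true_of_mem (fun S _ => fun i => i.elim0)
      rw [hfilt, total_one θ σ₀ m]
      linarith
    · have hn0 : 0 < n := Nat.pos_of_ne_zero hn
      have hn1 : (1:ℝ) ≤ (n : ℝ) := by exact_mod_cast hn0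
      set γ : ℝ := (1 - c) / 2 with hγ
      have hγ0 : 0 < γ := by rw [hγ]; linarith
      have hδγ : δ ≤ γ := by
        rw [hδ, hγ]
        rw [div_le_div_iff₀ (by nlinarith) (by norm_num)]
        nlinarith
      set ρ : ℝ := γ ^ 2 / (4 * (n : ℝ) ^ 2) with hρ
      have hρ0 : 0 < ρ := by positivity
      -- log facts
      have hlogn : 0 ≤ Real.log (n : ℝ) := Real.log_nonneg hn1
      have hlogε : Real.log ε < 0 := Real.log_neg hε0 hε1
      have hL : Real.log ((n : ℝ) / ε) = Real.log (n : ℝ) - Real.log ε :=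
        Real.log_div (by positivity) (ne_of_gt hε0)
      -- m * ρ is large
      have hmρ : Real.log ((n : ℝ) ^ 2 / ε) ≤ (m : ℝ) * ρ := by
        have hL0 : 0 < Real.log ((n : ℝ) / ε) := by rw [hL]; linarith
        have h1 : (16 * (n : ℝ) ^ 2 + 1) * δ⁻¹ ^ 2 * Real.log ((n : ℝ) / ε) ≤ (m : ℝ) := hm
        have h2 : δ ^ 2 ≤ γ ^ 2 := by nlinarith
        have hδ2 : (0:ℝ) < δ ^ 2 := by positivity
        have hinv : δ⁻¹ ^ 2 = (δ ^ 2)⁻¹ := by rw [← inv_pow]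
        have h3 : (m : ℝ) * ρ ≥ ((16 * (n : ℝ) ^ 2 + 1) * (δ ^ 2)⁻¹ * Real.log ((n : ℝ) / ε)) * ρ := by
          apply mul_le_mul_of_nonneg_right _ hρ0.le
          rw [← hinv]; exact h1
        have h4 : ((16 * (n : ℝ) ^ 2 + 1) * (δ ^ 2)⁻¹ * Real.log ((n : ℝ) / ε)) * ρ
            ≥ 4 * Real.log ((n : ℝ) / ε) := by
          rw [hρ]
          rw [ge_iff_le, show (16 * (n : ℝ) ^ 2 + 1) * (δ ^ 2)⁻¹ * Real.log ((n : ℝ) / ε)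
              * (γ ^ 2 / (4 * (n : ℝ) ^ 2))
            = Real.log ((n : ℝ) / ε) * ((16 * (n : ℝ) ^ 2 + 1) * (γ ^ 2 / δ ^ 2) / (4 * (n : ℝ) ^ 2))
            from by field_simp,
            show (4:ℝ) * Real.log ((n : ℝ) / ε) = Real.log ((n : ℝ) / ε) * 4 from mul_comm _ _]
          apply mul_le_mul_of_nonneg_left _ hL0.le
          have h5 : (1:ℝ) ≤ γ ^ 2 / δ ^ 2 := by
            rw [le_div_iff₀ hδ2]; nlinarith
          rw [le_div_iff₀ (by positivity)]
          nlinarith [mul_le_mul_of_nonneg_left h5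
            (show (0:ℝ) ≤ 16 * (n : ℝ) ^ 2 + 1 by positivity)]
        have h6 : Real.log ((n : ℝ) ^ 2 / ε) = 2 * Real.log (n : ℝ) - Real.log ε := by
          rw [Real.log_div (by positivity) (ne_of_gt hε0), Real.log_pow]
          push_cast; ring
        rw [h6]
        rw [hL] at h3 h4
        linarith
      -- union bound
      set Pairs := Finset.univ.filter (fun q : Fin n × Fin n => σ₀ q.1 < σ₀ q.2) with hPairs
      set w : (Fin m → Equiv.Perm (Fin n)) → ℝ := fun S => ∏ l : Fin m, mallows n θ σ₀ (S l)
        with hw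
      have hw0 : ∀ S, 0 ≤ w S := fun S =>
        Finset.prod_nonneg (fun l _ => (mallows_pos θ σ₀ (S l)).le)
      set E := Finset.univ.filter (fun S : Fin m → Equiv.Perm (Fin n) =>
          ∀ i j : Fin n, σ₀ i < σ₀ j →
            (∑ l : Fin m, ((S l i : ℕ) : ℝ)) < ∑ l : Fin m, ((S l j : ℕ) : ℝ)) with hE
      have hunion : ∑ S ∈ Finset.univ.filter (fun S : Fin m → Equiv.Perm (Fin n) =>
          ¬ ∀ i j : Fin n, σ₀ i < σ₀ j →
            (∑ l : Fin m, ((S l i : ℕ) : ℝ)) < ∑ l : Fin m, ((S l j : ℕ) : ℝ)), w S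
          ≤ ∑ q ∈ Pairs, ∑ S ∈ Finset.univ.filter (fun S : Fin m → Equiv.Perm (Fin n) =>
              ¬ ((∑ l : Fin m, ((S l q.1 : ℕ) : ℝ)) < ∑ l : Fin m, ((S l q.2 : ℕ) : ℝ))), w S := by
        have hstep : ∀ S ∈ Finset.univ.filter (fun S : Fin m → Equiv.Perm (Fin n) =>
            ¬ ∀ i j : Fin n, σ₀ i < σ₀ j →
              (∑ l : Fin m, ((S l i : ℕ) : ℝ)) < ∑ l : Fin m, ((S l j : ℕ) : ℝ)),
            w S ≤ ∑ q ∈ Pairs, (if ¬ ((∑ l : Fin m, ((S l q.1 : ℕ) : ℝ))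
              < ∑ l : Fin m, ((S l q.2 : ℕ) : ℝ)) then w S else 0) := by
          intro S hS
          simp only [Finset.mem_filter, Finset.mem_univ, true_and] at hS
          push_neg at hS
          obtain ⟨i, j, hij0, hfail⟩ := hS
          have hmem : (i, j) ∈ Pairs := Finset.mem_filter.mpr ⟨Finset.mem_univ _, hij0⟩
          have := Finset.single_le_sum (f := fun q : Fin n × Fin n =>
            (if ¬ ((∑ l : Fin m, ((S l q.1 : ℕ) : ℝ))
              < ∑ l : Fin m, ((S l q.2 : ℕ) : ℝ)) then w S else 0))
            (fun q _ => by split_ifs <;> first | exact hw0 S | exact le_rfl) hmem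
          refine le_trans ?_ this
          show w S ≤ if ¬ ((∑ l : Fin m, ((S l i : ℕ) : ℝ))
            < ∑ l : Fin m, ((S l j : ℕ) : ℝ)) then w S else 0
          rw [if_pos (not_lt.mpr hfail)]
        calc ∑ S ∈ Finset.univ.filter (fun S : Fin m → Equiv.Perm (Fin n) =>
              ¬ ∀ i j : Fin n, σ₀ i < σ₀ j →
                (∑ l : Fin m, ((S l i : ℕ) : ℝ)) < ∑ l : Fin m, ((S l j : ℕ) : ℝ)), w S
            ≤ ∑ S ∈ Finset.univ.filter (fun S : Fin m → Equiv.Perm (Fin n) =>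
              ¬ ∀ i j : Fin n, σ₀ i < σ₀ j →
                (∑ l : Fin m, ((S l i : ℕ) : ℝ)) < ∑ l : Fin m, ((S l j : ℕ) : ℝ)),
              ∑ q ∈ Pairs, (if ¬ ((∑ l : Fin m, ((S l q.1 : ℕ) : ℝ))
                < ∑ l : Fin m, ((S l q.2 : ℕ) : ℝ)) then w S else 0) :=
              Finset.sum_le_sum hstep
          _ = ∑ q ∈ Pairs, ∑ S ∈ Finset.univ.filter (fun S : Fin m → Equiv.Perm (Fin n) =>
              ¬ ∀ i j : Fin n, σ₀ i < σ₀ j →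
                (∑ l : Fin m, ((S l i : ℕ) : ℝ)) < ∑ l : Fin m, ((S l j : ℕ) : ℝ)),
              (if ¬ ((∑ l : Fin m, ((S l q.1 : ℕ) : ℝ))
                < ∑ l : Fin m, ((S l q.2 : ℕ) : ℝ)) then w S else 0) := Finset.sum_comm
          _ ≤ ∑ q ∈ Pairs, ∑ S : Fin m → Equiv.Perm (Fin n),
              (if ¬ ((∑ l : Fin m, ((S l q.1 : ℕ) : ℝ))
                < ∑ l : Fin m, ((S l q.2 : ℕ) : ℝ)) then w S else 0) := by
              apply Finset.sum_le_sum
              intro q _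
              apply Finset.sum_le_sum_of_subset_of_nonneg (Finset.subset_univ _)
              intro S _ _
              split_ifs <;> first | exact hw0 S | exact le_rfl
          _ = ∑ q ∈ Pairs, ∑ S ∈ Finset.univ.filter (fun S : Fin m → Equiv.Perm (Fin n) =>
              ¬ ((∑ l : Fin m, ((S l q.1 : ℕ) : ℝ)) < ∑ l : Fin m, ((S l q.2 : ℕ) : ℝ))), w S := by
              apply Finset.sum_congr rfl
              intro q _
              rw [Finset.sum_filter]
      have hpair : ∀ q ∈ Pairs, ∑ S ∈ Finset.univ.filter (fun S : Fin m → Equiv.Perm (Fin n) =>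
          ¬ ((∑ l : Fin m, ((S l q.1 : ℕ) : ℝ)) < ∑ l : Fin m, ((S l q.2 : ℕ) : ℝ))), w S
          ≤ Real.exp (-((m : ℝ) * ρ)) := by
        intro q hq
        simp only [hPairs, Finset.mem_filter] at hq
        have := borda_pair hθ hq.2 m
        rw [← hc, ← hγ, ← hρ] at this
        exact this
      have hcard : ((Pairs.card : ℝ)) ≤ (n : ℝ) ^ 2 := by
        have h1 : Pairs.card ≤ Fintype.card (Fin n × Fin n) :=
          le_trans (Finset.card_filter_le _ _) (le_of_eq (Finset.card_univ))
        have h2 : Fintype.card (Fin n × Fin n) = n * n := by simp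
        have : (Pairs.card : ℝ) ≤ ((n * n : ℕ) : ℝ) := by exact_mod_cast h1.trans (le_of_eq h2)
        rw [Nat.cast_mul] at this
        nlinarith
      have hfailb : ∑ S ∈ Finset.univ.filter (fun S : Fin m → Equiv.Perm (Fin n) =>
          ¬ ∀ i j : Fin n, σ₀ i < σ₀ j →
            (∑ l : Fin m, ((S l i : ℕ) : ℝ)) < ∑ l : Fin m, ((S l j : ℕ) : ℝ)), w S
          ≤ (n : ℝ) ^ 2 * Real.exp (-((m : ℝ) * ρ)) := by
        refine hunion.trans ?_
        calc ∑ q ∈ Pairs, ∑ S ∈ Finset.univ.filter (fun S : Fin m → Equiv.Perm (Fin n) =>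
              ¬ ((∑ l : Fin m, ((S l q.1 : ℕ) : ℝ)) < ∑ l : Fin m, ((S l q.2 : ℕ) : ℝ))), w S
            ≤ ∑ _q ∈ Pairs, Real.exp (-((m : ℝ) * ρ)) := Finset.sum_le_sum hpair
          _ = (Pairs.card : ℝ) * Real.exp (-((m : ℝ) * ρ)) := by
              rw [Finset.sum_const, nsmul_eq_mul]
          _ ≤ (n : ℝ) ^ 2 * Real.exp (-((m : ℝ) * ρ)) :=
              mul_le_mul_of_nonneg_right hcard (Real.exp_pos _).le
      have hεb : (n : ℝ) ^ 2 * Real.exp (-((m : ℝ) * ρ)) ≤ ε := by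
        have h1 : Real.exp (-((m : ℝ) * ρ)) ≤ ε / (n : ℝ) ^ 2 := by
          have h2 : -((m : ℝ) * ρ) ≤ Real.log (ε / (n : ℝ) ^ 2) := by
            rw [Real.log_div (ne_of_gt hε0) (by positivity),
              ← neg_sub (Real.log ((n : ℝ) ^ 2)) (Real.log ε), neg_le_neg_iff]
            rw [show Real.log ((n:ℝ)^2) - Real.log ε = Real.log ((n : ℝ) ^ 2 / ε) from
              (Real.log_div (by positivity) (ne_of_gt hε0)).symm]
            exact hmρ
          calc Real.exp (-((m : ℝ) * ρ)) ≤ Real.exp (Real.log (ε / (n : ℝ) ^ 2)) :=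
                Real.exp_le_exp.mpr h2
            _ = ε / (n : ℝ) ^ 2 := Real.exp_log (by positivity)
        calc (n : ℝ) ^ 2 * Real.exp (-((m : ℝ) * ρ)) ≤ (n : ℝ) ^ 2 * (ε / (n : ℝ) ^ 2) :=
              mul_le_mul_of_nonneg_left h1 (by positivity)
          _ = ε := by field_simp
      have htot := Finset.sum_filter_add_sum_filter_not Finset.univ
        (fun S : Fin m → Equiv.Perm (Fin n) =>
          ∀ i j : Fin n, σ₀ i < σ₀ j →
            (∑ l : Fin m, ((S l i : ℕ) : ℝ)) < ∑ l : Fin m, ((S l j : ℕ) : ℝ)) w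
      rw [total_one θ σ₀ m] at htot
      have := hfailb.trans hεb
      linarith
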